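/- With H = S_n, K = G(r,d,n), G = G(r,1,n), and Q = {(μ,...,μ,id) : μ ∈ C_d} the diagonal subgroup (so G/K ≅ C_d and Q·H ≅ C_d × S_n), the number of double cosets |H \ K / H| equals the number of double cosets |H \ G / (Q·H)|. -/

import Mathlib

set_option linter.unusedSectionVars false


open SemidirectProduct

/-- The permutation action of `S_n` on `C_r^n` by permuting coordinates. -/
def wreathAut (r n : ℕ) : Equiv.Perm (Fin n) →* MulAut (Fin n → Multiplicative (ZMod r)) where
  toFun σ := MulEquiv.arrowCongr σ (MulEquiv.refl _)
  map_one' := by ext f i; rfl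
  map_mul' σ τ := by ext f i; rfl

/-- The wreath product `G(r,1,n) = C_r ≀ S_n`. -/
abbrev Gr1n (r n : ℕ) := (Fin n → Multiplicative (ZMod r)) ⋊[wreathAut r n] Equiv.Perm (Fin n)

instance (r n : ℕ) [NeZero r] : Finite (Gr1n r n) :=
  Finite.of_injective (fun g => (g.left, g.right))
    (by intro a b h
        exact SemidirectProduct.ext (congrArg Prod.fst h) (congrArg Prod.snd h))

/-- The homomorphism `Φ : G(r,1,n) → C_d`, `(ξ₁,…,ξₙ,σ) ↦ (ξ₁⋯ξₙ)^{r/d}`,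
realised additively with values in `ZMod d`. -/
def PhiHom (r d n : ℕ) (h : d ∣ r) : Gr1n r n →* Multiplicative (ZMod d) where
  toFun g := Multiplicative.ofAdd (ZMod.castHom h (ZMod d) (∑ i, Multiplicative.toAdd (g.left i)))
  map_one' := by simp
  map_mul' g₁ g₂ := by
    have hl : (g₁ * g₂).left = g₁.left * wreathAut r n g₁.right g₂.left :=
      SemidirectProduct.mul_left g₁ g₂
    have hperm : (∑ i, Multiplicative.toAdd (wreathAut r n g₁.right g₂.left i))
        = ∑ i, Multiplicative.toAdd (g₂.left i) := by
      have := Equiv.sum_comp (g₁.right.symm) (fun i => Multiplicative.toAdd (g₂.left i))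
      simpa [wreathAut] using this
    simp [hl, Finset.sum_add_distrib, hperm, map_add]

/-- `S_n` as a subgroup of the wreath product. -/
def SnSub (r n : ℕ) : Subgroup (Gr1n r n) := (inr : Equiv.Perm (Fin n) →* Gr1n r n).range

/-- The diagonal embedding `C_r → G(r,1,n)`, `μ ↦ (μ, …, μ, id)`. -/
def diagHom (r n : ℕ) : Multiplicative (ZMod r) →* Gr1n r n where
  toFun μ := ⟨fun _ => μ, 1⟩
  map_one' := rfl
  map_mul' μ ν := by
    refine SemidirectProduct.ext ?_ (by simp)
    funext i
    simp [SemidirectProduct.mul_left, wreathAut]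
    rfl

/-- The subgroup `Q = {(μ,…,μ,id) : μ ∈ C_d}` of `G(r,1,n)`, where
`C_d = {ν^(r/d) : ν ∈ C_r}` is the subgroup of `d`-th roots of unity in `C_r`. -/
def Qdiag (r d n : ℕ) : Subgroup (Gr1n r n) :=
  ((diagHom r n).comp (powMonoidHom (r / d))).range


namespace CardDosetAux

variable (r d : ℕ) [NeZero r] [NeZero d]

/-- `ν ↦ (r/d)·ν` as a map `ZMod d → ZMod r`. -/
def cfun (ν : ZMod d) : ZMod r := ((r / d * ν.val : ℕ) : ZMod r)

lemma natCast_congr_of_zmod (hdr : d ∣ r) {m₁ m₂ : ℕ} (h : (m₁ : ZMod d) = (m₂ : ZMod d)) :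
    ((r / d * m₁ : ℕ) : ZMod r) = ((r / d * m₂ : ℕ) : ZMod r) := by
  rw [ZMod.natCast_eq_natCast_iff] at h ⊢
  have := h.mul_left' (c := r / d)
  rwa [Nat.div_mul_cancel hdr] at this

lemma cfun_zero : cfun r d (0 : ZMod d) = 0 := by
  simp [cfun, ZMod.val_zero]

lemma cfun_add (hdr : d ∣ r) (ν ν' : ZMod d) :
    cfun r d (ν + ν') = cfun r d ν + cfun r d ν' := by
  have hval : ∀ a : ZMod d, ((a.val : ℕ) : ZMod d) = a := ZMod.natCast_rightInverse
  have h : (((ν + ν').val : ℕ) : ZMod d) = ((ν.val + ν'.val : ℕ) : ZMod d) := by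
    rw [Nat.cast_add, hval, hval, hval]
  simp only [cfun]
  rw [natCast_congr_of_zmod r d hdr h, Nat.mul_add, Nat.cast_add]

lemma cast_mul_eq_zero_iff (hdr : d ∣ r) (m : ℕ) :
    ((r / d * m : ℕ) : ZMod r) = 0 ↔ ((m : ℕ) : ZMod d) = 0 := by
  rw [ZMod.natCast_eq_zero_iff, ZMod.natCast_eq_zero_iff]
  have hrd : 0 < r / d := Nat.div_pos (Nat.le_of_dvd (Nat.pos_of_ne_zero (NeZero.ne r)) hdr)
    (Nat.pos_of_ne_zero (by rintro rfl; exact NeZero.ne r (Nat.eq_zero_of_zero_dvd hdr)))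
  have hiff : (r ∣ r / d * m) ↔ (r / d * d ∣ r / d * m) := by
    rw [Nat.div_mul_cancel hdr]
  rw [hiff, Nat.mul_dvd_mul_iff_left hrd]

lemma cfun_mul_eq_zero_iff (hdr : d ∣ r) (ν : ZMod d) (x : ZMod r) :
    cfun r d ν * x = 0 ↔ ν * (ZMod.castHom hdr (ZMod d) x) = 0 := by
  have hx : ((x.val : ℕ) : ZMod r) = x := ZMod.natCast_rightInverse x
  have hν : ((ν.val : ℕ) : ZMod d) = ν := ZMod.natCast_rightInverse ν
  have h1 : cfun r d ν * x = ((r / d * (ν.val * x.val) : ℕ) : ZMod r) := by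
    simp only [cfun]
    push_cast
    rw [hx]
    ring
  have h2 : ν * (ZMod.castHom hdr (ZMod d) x) = ((ν.val * x.val : ℕ) : ZMod d) := by
    have hc : (ZMod.castHom hdr (ZMod d)) x = ((x.val : ℕ) : ZMod d) := by
      rw [ZMod.castHom_apply, ← ZMod.natCast_val]
    rw [hc]
    push_cast
    rw [hν]
  rw [h1, h2, cast_mul_eq_zero_iff r d hdr]


open Equiv Equiv.Perm

variable (n : ℕ)

/-- `a ↦ (i ↦ a (σ i) - a i)`. -/
def TT (σ : Equiv.Perm (Fin n)) : (Fin n → ZMod r) →+ (Fin n → ZMod r) where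
  toFun a := fun i => a (σ i) - a i
  map_zero' := by funext i; simp
  map_add' a b := by funext i; simp [Pi.add_apply]; ring

/-- `a ↦ (∑ a i) mod d`. -/
def SS (hdr : d ∣ r) : (Fin n → ZMod r) →+ ZMod d where
  toFun a := ZMod.castHom hdr (ZMod d) (∑ i, a i)
  map_zero' := by simp
  map_add' a b := by simp only [Pi.add_apply, Finset.sum_add_distrib, map_add]

lemma key_forward (hdr : d ∣ r) (σ : Equiv.Perm (Fin n)) (ν : ZMod d) {a : Fin n → ZMod r}
    (ha : TT r n σ a = fun _ => cfun r d ν) {b : Fin n → ZMod r} (hb : TT r n σ b = 0) :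
    ν * SS r d n hdr b = 0 := by
  have hb' : ∀ i, b (σ i) = b i := by
    intro i
    have := congrFun hb i
    simpa [TT, sub_eq_zero] using this
  have ha' : ∀ i, a (σ i) - a i = cfun r d ν := fun i => congrFun ha i
  have hsum : cfun r d ν * ∑ i, b i = 0 := by
    have h1 : ∀ i, cfun r d ν * b i = a (σ i) * b (σ i) - a i * b i := by
      intro i
      rw [← ha' i, ← hb' i]
      ring
    calc cfun r d ν * ∑ i, b i = ∑ i, cfun r d ν * b i := Finset.mul_sum _ _ _
      _ = ∑ i, (a (σ i) * b (σ i) - a i * b i) := by simp only [h1]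
      _ = (∑ i, a (σ i) * b (σ i)) - ∑ i, a i * b i := Finset.sum_sub_distrib _ _
      _ = 0 := by rw [Equiv.sum_comp σ (fun j => a j * b j)]; ring
  have := (cfun_mul_eq_zero_iff r d hdr ν (∑ i, b i)).mp hsum
  exact this

lemma step_kill (hdr : d ∣ r) (σ : Equiv.Perm (Fin n)) (ν : ZMod d)
    (hν : ∀ b : Fin n → ZMod r, TT r n σ b = 0 → ν * SS r d n hdr b = 0)
    (x : Fin n) (q : ℕ) (hq : (σ ^ q) x = x) : q • cfun r d ν = 0 := by
  set b : Fin n → ZMod r := fun j => if σ.SameCycle x j then 1 else 0 with hbdef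
  have hTb : TT r n σ b = 0 := by
    funext j
    have : σ.SameCycle x (σ j) ↔ σ.SameCycle x j := sameCycle_apply_right
    simp only [TT, AddMonoidHom.coe_mk, ZeroHom.coe_mk, hbdef, Pi.zero_apply]
    rw [if_congr this rfl rfl, sub_self]
  set m : ℕ := (Finset.univ.filter (fun j => σ.SameCycle x j)).card with hmdef
  have hSb : SS r d n hdr b = ((m : ℕ) : ZMod d) := by
    simp only [SS, AddMonoidHom.coe_mk, ZeroHom.coe_mk, hbdef]
    rw [Finset.sum_boole, map_natCast]
  have hνm : ν * ((m : ℕ) : ZMod d) = 0 := by rw [← hSb]; exact hν b hTb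
  have hmμ : m • cfun r d ν = 0 := by
    have hcast : (ZMod.castHom hdr (ZMod d)) ((m : ℕ) : ZMod r) = ((m : ℕ) : ZMod d) :=
      map_natCast _ m
    have := (cfun_mul_eq_zero_iff r d hdr ν ((m : ℕ) : ZMod r)).mpr (by rw [hcast]; exact hνm)
    rw [nsmul_eq_mul, mul_comm]
    exact_mod_cast this
  by_cases hx : σ x = x
  · have hm1 : m = 1 := by
      rw [hmdef]
      rw [Finset.card_eq_one]
      refine ⟨x, ?_⟩
      ext j
      simp only [Finset.mem_filter, Finset.mem_univ, true_and, Finset.mem_singleton]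
      constructor
      · rintro ⟨z, hz⟩
        rw [← hz, zpow_apply_eq_self_of_apply_eq_self hx]
      · rintro rfl; exact Equiv.Perm.SameCycle.refl σ _
    have : cfun r d ν = 0 := by rw [← one_smul ℕ (cfun r d ν), ← hm1]; exact hmμ
    rw [this, smul_zero]
  · have hcyc : (σ.cycleOf x).IsCycle := isCycle_cycleOf σ hx
    have hone : σ.cycleOf x ^ q = 1 := hcyc.pow_eq_one_iff.mpr
      ⟨x, by rw [cycleOf_apply_self]; exact hx, by rw [cycleOf_pow_apply_self]; exact hq⟩
    have horder : orderOf (σ.cycleOf x) ∣ q := orderOf_dvd_of_pow_eq_one hone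
    have hm : orderOf (σ.cycleOf x) = m := by
      rw [hcyc.orderOf, hmdef]
      congr 1
      ext j
      rw [Finset.mem_filter, mem_support_cycleOf_iff]
      simp only [Finset.mem_univ, true_and]
      exact ⟨fun h => h.1, fun h => ⟨h, mem_support.mpr hx⟩⟩
    obtain ⟨t, rfl⟩ := horder
    rw [hm, mul_comm, mul_smul, hmμ, smul_zero]


lemma min'_congr {α : Type*} [LinearOrder α] {s t : Finset α} (hs : s.Nonempty) (h : s = t) :
    s.min' hs = t.min' (h ▸ hs) := by subst h; rfl

lemma exists_T_eq (hdr : d ∣ r) (σ : Equiv.Perm (Fin n)) (ν : ZMod d)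
    (hν : ∀ b : Fin n → ZMod r, TT r n σ b = 0 → ν * SS r d n hdr b = 0) :
    ∃ a : Fin n → ZMod r, TT r n σ a = fun _ => cfun r d ν := by
  rcases Nat.eq_zero_or_pos n with hn | hn
  · subst hn
    exact ⟨fun i => 0, funext fun i => i.elim0⟩
  -- the cycle, as a finset
  set C : Fin n → Finset (Fin n) := fun i => Finset.univ.filter (fun j => σ.SameCycle i j)
    with hCdef
  have hCne : ∀ i, (C i).Nonempty := fun i =>
    ⟨i, by simp [hCdef, Equiv.Perm.SameCycle.refl]⟩
  set rep : Fin n → Fin n := fun i => (C i).min' (hCne i) with hrepdef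
  have hrep : ∀ i, σ.SameCycle (rep i) i := by
    intro i
    have : rep i ∈ C i := Finset.min'_mem _ _
    simp only [hCdef, Finset.mem_filter] at this
    exact this.2.symm
  have hCσ : ∀ i, C (σ i) = C i := by
    intro i
    ext j
    simp only [hCdef, Finset.mem_filter, Finset.mem_univ, true_and]
    exact sameCycle_apply_left
  have hrepσ : ∀ i, rep (σ i) = rep i := by
    intro i
    simp only [hrepdef]
    exact min'_congr _ (hCσ i)
  have ex : ∀ i, ∃ k : ℕ, (σ ^ k) (rep i) = i := by
    intro i
    obtain ⟨k, -, hk⟩ := (hrep i).exists_pow_eq'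
    exact ⟨k, hk⟩
  set kk : Fin n → ℕ := fun i => Nat.find (ex i) with hkkdef
  have hkk : ∀ i, (σ ^ kk i) (rep i) = i := fun i => Nat.find_spec (ex i)
  -- exponent congruence
  have eqsmul : ∀ (e f : ℕ) (z : Fin n), (σ ^ e) z = (σ ^ f) z →
      e • cfun r d ν = f • cfun r d ν := by
    have main : ∀ (e f : ℕ) (z : Fin n), e ≤ f → (σ ^ e) z = (σ ^ f) z →
        e • cfun r d ν = f • cfun r d ν := by
      intro e f z hef heq
      obtain ⟨q, rfl⟩ := Nat.exists_eq_add_of_le hef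
      have hq : (σ ^ q) z = z := by
        have : (σ ^ e) ((σ ^ q) z) = (σ ^ e) z := by
          rw [← Equiv.Perm.mul_apply, ← pow_add]
          exact heq.symm
        exact (σ ^ e).injective this
      rw [add_nsmul, step_kill r d n hdr σ ν hν z q hq, add_zero]
    intro e f z heq
    rcases le_total e f with hef | hfe
    · exact main e f z hef heq
    · exact (main f e z hfe heq.symm).symm
  refine ⟨fun i => (kk i) • cfun r d ν, funext fun i => ?_⟩
  have h1 : (σ ^ (kk (σ i))) (rep i) = σ i := by rw [← hrepσ i]; exact hkk (σ i)
  have h2 : (σ ^ (kk i + 1)) (rep i) = σ i := by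
    rw [pow_succ']
    rw [Equiv.Perm.mul_apply, hkk i]
  have h3 : kk (σ i) • cfun r d ν = (kk i + 1) • cfun r d ν :=
    eqsmul _ _ _ (h1.trans h2.symm)
  show (kk (σ i)) • cfun r d ν - (kk i) • cfun r d ν = cfun r d ν
  rw [h3, succ_nsmul, add_sub_cancel_left]


lemma ann_card (W : AddSubgroup (ZMod d)) :
    Nat.card {ν : ZMod d // ∀ w ∈ W, ν * w = 0} * Nat.card W = d := by
  have : IsAddCyclic W := inferInstance
  obtain ⟨g, hg⟩ := IsAddCyclic.exists_generator (α := W)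
  have hW : W = AddSubgroup.zmultiples (g : ZMod d) := by
    ext x
    constructor
    · intro hx
      obtain ⟨k, hk⟩ := AddSubgroup.mem_zmultiples_iff.mp (hg ⟨x, hx⟩)
      exact AddSubgroup.mem_zmultiples_iff.mpr ⟨k, by
        have := congrArg (Subtype.val) hk
        simpa using this⟩
    · intro hx
      obtain ⟨k, hk⟩ := AddSubgroup.mem_zmultiples_iff.mp hx
      rw [← hk]
      exact AddSubgroup.zsmul_mem W g.2 k
  set φ : ZMod d →+ ZMod d := AddMonoidHom.mulRight (g : ZMod d) with hφ
  have hker : Nat.card {ν : ZMod d // ∀ w ∈ W, ν * w = 0} = Nat.card φ.ker := by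
    apply Nat.card_congr
    refine ⟨fun ν => ⟨ν.1, ?_⟩, fun ν => ⟨ν.1, ?_⟩, fun ν => rfl, fun ν => rfl⟩
    · exact AddMonoidHom.mem_ker.mpr (ν.2 (g : ZMod d) g.2)
    · intro w hw
      rw [hW] at hw
      obtain ⟨k, hk⟩ := AddSubgroup.mem_zmultiples_iff.mp hw
      have h0 : (ν.1 : ZMod d) * (g : ZMod d) = 0 := AddMonoidHom.mem_ker.mp ν.2
      rw [← hk, mul_smul_comm, h0, smul_zero]
  have hrange : φ.range = W := by
    ext x
    constructor
    · rintro ⟨y, rfl⟩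
      rw [hW]
      refine AddSubgroup.mem_zmultiples_iff.mpr ⟨(y.val : ℤ), ?_⟩
      show (y.val : ℤ) • (g : ZMod d) = y * (g : ZMod d)
      rw [natCast_zsmul, nsmul_eq_mul, ZMod.natCast_val, ZMod.cast_id]
    · intro hx
      rw [hW] at hx
      obtain ⟨k, hk⟩ := AddSubgroup.mem_zmultiples_iff.mp hx
      exact ⟨(k : ZMod d), by rw [← hk]; show (k : ZMod d) * _ = _; rw [← zsmul_eq_mul]⟩
  have hcard : Nat.card (ZMod d) = Nat.card (ZMod d ⧸ φ.ker) * Nat.card φ.ker :=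
    AddSubgroup.card_eq_card_quotient_mul_card_addSubgroup φ.ker
  have hq : Nat.card (ZMod d ⧸ φ.ker) = Nat.card W := by
    rw [← hrange]
    exact Nat.card_congr (QuotientAddGroup.quotientKerEquivRange φ).toEquiv
  rw [hker, mul_comm, ← hq, ← hcard, Nat.card_zmod]


lemma per_sigma (hdr : d ∣ r) (σ : Equiv.Perm (Fin n)) :
    d * Nat.card {a : Fin n → ZMod r // TT r n σ a = 0 ∧ SS r d n hdr a = 0}
      = ∑ ν : ZMod d, Nat.card {a : Fin n → ZMod r // TT r n σ a = fun _ => cfun r d ν} := by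
  classical
  set NT := (TT r n σ).ker with hNTdef
  set S' := (SS r d n hdr).comp NT.subtype with hS'def
  have e₁ : {a : Fin n → ZMod r // TT r n σ a = 0 ∧ SS r d n hdr a = 0} ≃ S'.ker :=
    { toFun := fun a => ⟨⟨a.1, AddMonoidHom.mem_ker.mpr a.2.1⟩,
        AddMonoidHom.mem_ker.mpr a.2.2⟩
      invFun := fun b => ⟨b.1.1, AddMonoidHom.mem_ker.mp b.1.2, AddMonoidHom.mem_ker.mp b.2⟩
      left_inv := fun a => rfl
      right_inv := fun b => rfl }
  have hNT : Nat.card NT = Nat.card S'.range * Nat.card S'.ker := by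
    have h1 : Nat.card NT = Nat.card (NT ⧸ S'.ker) * Nat.card S'.ker :=
      AddSubgroup.card_eq_card_quotient_mul_card_addSubgroup S'.ker
    have h2 : Nat.card (NT ⧸ S'.ker) = Nat.card S'.range :=
      Nat.card_congr (QuotientAddGroup.quotientKerEquivRange S').toEquiv
    rw [h1, h2]
  set P : ZMod d → Prop := fun ν => ∃ a : Fin n → ZMod r, TT r n σ a = fun _ => cfun r d ν
    with hPdef
  have fib : ∀ ν : ZMod d,
      Nat.card {a : Fin n → ZMod r // TT r n σ a = fun _ => cfun r d ν}
      = if P ν then Nat.card NT else 0 := by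
    intro ν
    split_ifs with hex
    · obtain ⟨a₀, ha₀⟩ := hex
      apply Nat.card_congr
      refine ⟨fun x => ⟨x.1 - a₀, AddMonoidHom.mem_ker.mpr (by rw [map_sub, x.2, ha₀, sub_self])⟩,
        fun y => ⟨y.1 + a₀, by rw [map_add, AddMonoidHom.mem_ker.mp y.2, ha₀, zero_add]⟩,
        fun x => Subtype.ext (by simp), fun y => Subtype.ext (by simp)⟩
    · have : IsEmpty {a : Fin n → ZMod r // TT r n σ a = fun _ => cfun r d ν} :=
        ⟨fun x => hex ⟨x.1, x.2⟩⟩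
      exact Nat.card_of_isEmpty
  have hPiff : ∀ ν : ZMod d, P ν ↔ (∀ w ∈ S'.range, ν * w = 0) := by
    intro ν
    constructor
    · rintro ⟨a, ha⟩ w ⟨b, rfl⟩
      exact key_forward r d n hdr σ ν ha (AddMonoidHom.mem_ker.mp b.2)
    · intro hann
      exact exists_T_eq r d n hdr σ ν (fun b hb =>
        hann (S' ⟨b, AddMonoidHom.mem_ker.mpr hb⟩) ⟨⟨b, AddMonoidHom.mem_ker.mpr hb⟩, rfl⟩)
  have hsum : ∑ ν : ZMod d, Nat.card {a : Fin n → ZMod r // TT r n σ a = fun _ => cfun r d ν}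
      = (Finset.univ.filter P).card * Nat.card NT := by
    rw [Finset.sum_congr rfl (fun ν _ => fib ν), Finset.sum_ite, Finset.sum_const,
      Finset.sum_const_zero, add_zero, smul_eq_mul]
  have hD : (Finset.univ.filter P).card = Nat.card {ν : ZMod d // ∀ w ∈ S'.range, ν * w = 0} := by
    rw [Nat.card_eq_fintype_card, Fintype.card_subtype]
    congr 1
    apply Finset.filter_congr
    intro ν _
    exact hPiff ν
  have hann := ann_card d S'.range
  rw [hsum, hD, Nat.card_congr e₁, hNT]
  conv_rhs => rw [← mul_assoc, hann]


/-- permutation action on tuples -/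
def permSmul (σ : Equiv.Perm (Fin n)) (a : Fin n → ZMod r) : Fin n → ZMod r :=
  fun i => a (σ⁻¹ i)

lemma permSmul_one (a : Fin n → ZMod r) : permSmul r n 1 a = a := rfl

lemma permSmul_mul (σ τ : Equiv.Perm (Fin n)) (a : Fin n → ZMod r) :
    permSmul r n (σ * τ) a = permSmul r n σ (permSmul r n τ a) := rfl

lemma SS_permSmul (hdr : d ∣ r) (σ : Equiv.Perm (Fin n)) (a : Fin n → ZMod r) :
    SS r d n hdr (permSmul r n σ a) = SS r d n hdr a := by
  simp only [SS, AddMonoidHom.coe_mk, ZeroHom.coe_mk, permSmul]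
  rw [Equiv.sum_comp σ⁻¹ a]

instance (hdr : d ∣ r) : MulAction (Equiv.Perm (Fin n)) ({a : Fin n → ZMod r // SS r d n hdr a = 0}) where
  smul σ a := ⟨permSmul r n σ a.1, by rw [SS_permSmul]; exact a.2⟩
  one_smul a := Subtype.ext (permSmul_one r n a.1)
  mul_smul σ τ a := Subtype.ext (permSmul_mul r n σ τ a.1)

lemma X1_smul_val (hdr : d ∣ r) (σ : Equiv.Perm (Fin n)) (a : {a : Fin n → ZMod r // SS r d n hdr a = 0}) :
    (σ • a).1 = permSmul r n σ a.1 := rfl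

instance X2action [hf : Fact (d ∣ r)] :
    MulAction (Equiv.Perm (Fin n) × Multiplicative (ZMod d)) (Fin n → ZMod r) where
  smul p a := permSmul r n p.1 a + fun _ => cfun r d p.2.toAdd
  one_smul a := by
    show permSmul r n 1 a + (fun _ => cfun r d (0 : ZMod d)) = a
    rw [permSmul_one, cfun_zero]
    funext i
    simp
  mul_smul p q a := by
    show permSmul r n (p.1 * q.1) a + (fun _ => cfun r d (p.2.toAdd + q.2.toAdd))
      = permSmul r n p.1 (permSmul r n q.1 a + fun _ => cfun r d q.2.toAdd)
        + fun _ => cfun r d p.2.toAdd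
    funext i
    simp only [permSmul, Pi.add_apply, cfun_add r d hf.out, mul_inv_rev, Equiv.Perm.mul_apply]
    ring

lemma X2_smul_def [hf : Fact (d ∣ r)] (p : Equiv.Perm (Fin n) × Multiplicative (ZMod d))
    (a : Fin n → ZMod r) :
    p • a = permSmul r n p.1 a + fun _ => cfun r d p.2.toAdd := rfl

lemma fix1_card (hdr : d ∣ r) (σ : Equiv.Perm (Fin n)) :
    Nat.card (MulAction.fixedBy ({a : Fin n → ZMod r // SS r d n hdr a = 0}) σ)
      = Nat.card {a : Fin n → ZMod r // TT r n σ a = 0 ∧ SS r d n hdr a = 0} := by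
  apply Nat.card_congr
  refine ⟨fun x => ⟨x.1.1, ?_, x.1.2⟩, fun a => ⟨⟨a.1, a.2.2⟩, ?_⟩, fun x => rfl, fun a => rfl⟩
  · have hx : permSmul r n σ x.1.1 = x.1.1 := congrArg Subtype.val x.2
    funext i
    have := congrFun hx (σ i)
    simp only [permSmul, Equiv.Perm.inv_def, Equiv.symm_apply_apply] at this
    show x.1.1 (σ i) - x.1.1 i = 0
    rw [← this, sub_self]
  · have ha : ∀ j, a.1 (σ j) - a.1 j = 0 := fun j => congrFun a.2.1 j
    show σ • (⟨a.1, a.2.2⟩ : {a : Fin n → ZMod r // SS r d n hdr a = 0}) = ⟨a.1, a.2.2⟩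
    apply Subtype.ext
    show permSmul r n σ a.1 = a.1
    funext i
    have := ha (σ⁻¹ i)
    rw [sub_eq_zero] at this
    simpa [permSmul] using this.symm

lemma fix2_card [hf : Fact (d ∣ r)] (σ : Equiv.Perm (Fin n)) (ν : Multiplicative (ZMod d)) :
    Nat.card (MulAction.fixedBy (Fin n → ZMod r) ((σ, ν) : _ × Multiplicative (ZMod d)))
      = Nat.card {a : Fin n → ZMod r // TT r n σ a = fun _ => cfun r d ν.toAdd} := by
  apply Nat.card_congr
  have key : ∀ a : Fin n → ZMod r,
      ((σ, ν) : _ × Multiplicative (ZMod d)) • a = a ↔ TT r n σ a = fun _ => cfun r d ν.toAdd := by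
    intro a
    rw [X2_smul_def]
    constructor
    · intro hsm
      funext j
      have := congrFun hsm (σ j)
      simp only [permSmul, Pi.add_apply, Equiv.Perm.inv_def, Equiv.symm_apply_apply] at this
      show a (σ j) - a j = cfun r d ν.toAdd
      rw [← this]
      ring
    · intro hT
      funext i
      have := congrFun hT (σ⁻¹ i)
      show permSmul r n σ a i + cfun r d ν.toAdd = a i
      simp only [permSmul]
      have h2 : a (σ (σ⁻¹ i)) - a (σ⁻¹ i) = cfun r d ν.toAdd := this
      rw [show σ (σ⁻¹ i) = i from σ.apply_symm_apply i] at h2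
      rw [← h2]
      ring
  exact Equiv.subtypeEquiv (Equiv.refl _) (fun a => key a)


lemma orbits_card_eq [hf : Fact (d ∣ r)] :
    Nat.card (Quotient (MulAction.orbitRel (Equiv.Perm (Fin n))
        {a : Fin n → ZMod r // SS r d n hf.out a = 0}))
      = Nat.card (Quotient (MulAction.orbitRel (Equiv.Perm (Fin n) × Multiplicative (ZMod d))
          (Fin n → ZMod r))) := by
  classical
  haveI : Fintype {a : Fin n → ZMod r // SS r d n hf.out a = 0} := Subtype.fintype _
  haveI : ∀ σ : Equiv.Perm (Fin n),
      Fintype (MulAction.fixedBy {a : Fin n → ZMod r // SS r d n hf.out a = 0} σ) :=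
    fun σ => Fintype.ofFinite _
  haveI : ∀ p : Equiv.Perm (Fin n) × Multiplicative (ZMod d),
      Fintype (MulAction.fixedBy (Fin n → ZMod r) p) := fun p => Fintype.ofFinite _
  haveI : Fintype (Quotient (MulAction.orbitRel (Equiv.Perm (Fin n))
      {a : Fin n → ZMod r // SS r d n hf.out a = 0})) := Fintype.ofFinite _
  haveI : Fintype (Quotient (MulAction.orbitRel (Equiv.Perm (Fin n) × Multiplicative (ZMod d))
      (Fin n → ZMod r))) := Fintype.ofFinite _
  have B1 := MulAction.sum_card_fixedBy_eq_card_orbits_mul_card_group (Equiv.Perm (Fin n))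
    {a : Fin n → ZMod r // SS r d n hf.out a = 0}
  have B2 := MulAction.sum_card_fixedBy_eq_card_orbits_mul_card_group
    (Equiv.Perm (Fin n) × Multiplicative (ZMod d)) (Fin n → ZMod r)
  rw [Fintype.sum_prod_type] at B2
  have key : ∀ σ : Equiv.Perm (Fin n),
      (∑ ν : Multiplicative (ZMod d),
        Fintype.card (MulAction.fixedBy (Fin n → ZMod r) ((σ, ν) : _ × Multiplicative (ZMod d))))
      = d * Fintype.card (MulAction.fixedBy
          {a : Fin n → ZMod r // SS r d n hf.out a = 0} σ) := by
    intro σ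
    have h1 : ∀ ν : Multiplicative (ZMod d),
        Fintype.card (MulAction.fixedBy (Fin n → ZMod r) ((σ, ν) : _ × Multiplicative (ZMod d)))
        = Nat.card {a : Fin n → ZMod r // TT r n σ a = fun _ => cfun r d ν.toAdd} := by
      intro ν
      rw [← Nat.card_eq_fintype_card]
      exact fix2_card r d n σ ν
    rw [Finset.sum_congr rfl (fun ν _ => h1 ν)]
    have h2 : (∑ ν : Multiplicative (ZMod d),
        Nat.card {a : Fin n → ZMod r // TT r n σ a = fun _ => cfun r d ν.toAdd})
        = ∑ ν : ZMod d, Nat.card {a : Fin n → ZMod r // TT r n σ a = fun _ => cfun r d ν} :=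
      Fintype.sum_equiv (Multiplicative.toAdd) _ _ (fun ν => rfl)
    rw [h2, ← per_sigma r d n hf.out σ, ← fix1_card r d n hf.out σ, Nat.card_eq_fintype_card]
  rw [Finset.sum_congr rfl (fun σ _ => key σ), ← Finset.mul_sum, B1] at B2
  rw [Fintype.card_prod, Fintype.card_multiplicative, ZMod.card] at B2
  rw [Nat.card_eq_fintype_card, Nat.card_eq_fintype_card]
  have hpos : 0 < Fintype.card (Equiv.Perm (Fin n)) * d :=
    Nat.mul_pos Fintype.card_pos (Nat.pos_of_ne_zero (NeZero.ne d))
  apply Nat.eq_of_mul_eq_mul_right hpos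
  rw [← B2]
  ring


open SemidirectProduct MulAction

section Bridge

variable (r d n : ℕ) [NeZero r] [NeZero d]

/-- additive coordinates of a wreath product element -/
def toX (x : Gr1n r n) : Fin n → ZMod r := fun i => (x.left i).toAdd

/-- tuple embedded in the wreath product -/
def emb (a : Fin n → ZMod r) : Gr1n r n := ⟨fun i => Multiplicative.ofAdd (a i), 1⟩

lemma toX_emb (a : Fin n → ZMod r) : toX r n (emb r n a) = a := rfl

lemma emb_toX (x : Gr1n r n) : emb r n (toX r n x) = ⟨x.left, 1⟩ := rfl

lemma decomp (x : Gr1n r n) : x = (⟨x.left, 1⟩ : Gr1n r n) * inr x.right := by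
  refine SemidirectProduct.ext ?_ ?_ <;> simp

lemma conj_left (σ : Equiv.Perm (Fin n)) (x q : Gr1n r n) :
    (inr σ * x * q).left = fun i => x.left (σ⁻¹ i) * q.left (x.right⁻¹ (σ⁻¹ i)) := by
  funext i
  rw [SemidirectProduct.mul_left, SemidirectProduct.mul_left, SemidirectProduct.mul_right,
    SemidirectProduct.left_inr, SemidirectProduct.right_inr]
  simp [wreathAut, Equiv.Perm.inv_def, Equiv.Perm.mul_def, Equiv.symm_trans_apply]

lemma conj_right (σ : Equiv.Perm (Fin n)) (x q : Gr1n r n) :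
    (inr σ * x * q).right = σ * x.right * q.right := by simp

lemma mem_SnSub {x : Gr1n r n} : x ∈ SnSub r n ↔ ∃ σ, x = inr σ := by
  constructor
  · rintro ⟨σ, rfl⟩; exact ⟨σ, rfl⟩
  · rintro ⟨σ, rfl⟩; exact ⟨σ, rfl⟩

lemma mem_ker_iff (hdr : d ∣ r) (x : Gr1n r n) :
    x ∈ (PhiHom r d n hdr).ker ↔ SS r d n hdr (toX r n x) = 0 := by
  rw [MonoidHom.mem_ker]
  show Multiplicative.ofAdd (ZMod.castHom hdr (ZMod d) (∑ i, (x.left i).toAdd)) = 1 ↔ _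
  rw [ofAdd_eq_one]
  exact Iff.rfl

lemma inr_mem_ker (hdr : d ∣ r) (τ : Equiv.Perm (Fin n)) : inr τ ∈ (PhiHom r d n hdr).ker := by
  rw [mem_ker_iff]
  show ZMod.castHom hdr (ZMod d) (∑ i, ((1 : Fin n → Multiplicative (ZMod r)) i).toAdd) = 0
  simp

lemma emb_mem_ker (hdr : d ∣ r) (a : Fin n → ZMod r) (ha : SS r d n hdr a = 0) :
    emb r n a ∈ (PhiHom r d n hdr).ker := by
  rw [mem_ker_iff, toX_emb]
  exact ha

/-- `Q ⊔ S_n` described explicitly. -/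
def QHsub : Subgroup (Gr1n r n) where
  carrier := {x | ∃ μ : Multiplicative (ZMod r), x.left = fun _ => μ ^ (r / d)}
  one_mem' := ⟨1, by funext i; simp⟩
  mul_mem' := by
    rintro x y ⟨μ, hμ⟩ ⟨ν, hν⟩
    refine ⟨μ * ν, ?_⟩
    funext i
    rw [mul_left]
    show x.left i * y.left (x.right⁻¹ i) = _
    rw [hμ, hν, mul_pow]
  inv_mem' := by
    rintro x ⟨μ, hμ⟩
    refine ⟨μ⁻¹, ?_⟩
    funext i
    rw [inv_left]
    show (x.left⁻¹) ((x.right⁻¹)⁻¹ i) = _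
    simp [hμ, inv_pow]

lemma diag_mem_Qdiag (μ : Multiplicative (ZMod r)) :
    (⟨fun _ => μ ^ (r / d), 1⟩ : Gr1n r n) ∈ Qdiag r d n :=
  ⟨μ, rfl⟩

lemma sup_eq_QHsub : Qdiag r d n ⊔ SnSub r n = QHsub r d n := by
  apply le_antisymm
  · apply sup_le
    · rintro x ⟨μ, rfl⟩
      exact ⟨μ, rfl⟩
    · rintro x ⟨σ, rfl⟩
      exact ⟨1, by funext i; simp⟩
  · rintro x ⟨μ, hμ⟩
    have hx : x = (⟨fun _ => μ ^ (r / d), 1⟩ : Gr1n r n) * inr x.right := by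
      refine SemidirectProduct.ext ?_ (by simp)
      rw [mul_left]
      simp [wreathAut, hμ]
      rfl
    rw [hx]
    exact Subgroup.mul_mem _ (Subgroup.mem_sup_left (diag_mem_Qdiag r d n μ))
      (Subgroup.mem_sup_right ⟨x.right, rfl⟩)

variable (hdr : d ∣ r)

/-- Double cosets `H\K/H` are the `S_n`-orbits on tuples with sum `≡ 0 mod d`. -/
noncomputable def equiv1 :
    DoubleCoset.Quotient
        (((SnSub r n).subgroupOf (PhiHom r d n hdr).ker : Subgroup (PhiHom r d n hdr).ker) :
          Set (PhiHom r d n hdr).ker)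
        (((SnSub r n).subgroupOf (PhiHom r d n hdr).ker : Subgroup (PhiHom r d n hdr).ker) :
          Set (PhiHom r d n hdr).ker)
      ≃ Quotient (MulAction.orbitRel (Equiv.Perm (Fin n))
          {a : Fin n → ZMod r // SS r d n hdr a = 0}) := by
  classical
  set K := (PhiHom r d n hdr).ker with hK
  set H' := (SnSub r n).subgroupOf K with hH'
  set fwd : K → {a : Fin n → ZMod r // SS r d n hdr a = 0} :=
    fun k => ⟨toX r n k.1, (mem_ker_iff r d n hdr k.1).mp k.2⟩ with hfwd
  set embK : {a : Fin n → ZMod r // SS r d n hdr a = 0} → K :=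
    fun a => ⟨emb r n a.1, emb_mem_ker r d n hdr a.1 a.2⟩ with hembK
  have hinrK : ∀ τ : Equiv.Perm (Fin n), (⟨inr τ, inr_mem_ker r d n hdr τ⟩ : K) ∈ H' := by
    intro τ
    rw [hH', Subgroup.mem_subgroupOf]
    exact ⟨τ, rfl⟩
  refine ⟨fun q => Quotient.liftOn' q (fun k => Quotient.mk'' (fwd k)) ?_,
    fun q => Quotient.liftOn' q (fun a => DoubleCoset.mk H' H' (embK a)) ?_,
    ?_, ?_⟩
  · intro k k' hrel
    obtain ⟨a, ha, b, hb, hk'⟩ := DoubleCoset.rel_iff.mp hrel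
    rw [hH', Subgroup.mem_subgroupOf] at ha hb
    obtain ⟨σ, hσ⟩ := mem_SnSub r n |>.mp ha
    obtain ⟨σ', hσ'⟩ := mem_SnSub r n |>.mp hb
    apply Quotient.sound'
    have hval : k'.1 = inr σ * k.1 * inr σ' := by
      rw [hk']
      simp only [Subgroup.coe_mul, hσ, hσ']
    have hleft : k'.1.left = fun i => k.1.left (σ⁻¹ i) := by
      rw [hval, conj_left]
      funext i
      simp
    have hfk : σ • fwd k = fwd k' := by
      apply Subtype.ext
      show permSmul r n σ (toX r n k.1) = toX r n k'.1
      funext i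
      show (toX r n k.1) (σ⁻¹ i) = (k'.1.left i).toAdd
      rw [hleft]
      rfl
    show fwd k ∈ MulAction.orbit _ (fwd k')
    exact MulAction.mem_orbit_iff.mpr ⟨σ⁻¹, by rw [← hfk, inv_smul_smul]⟩
  · intro a b hab
    obtain ⟨σ, hσ⟩ := MulAction.mem_orbit_iff.mp hab
    have hba : a.1 = permSmul r n σ b.1 := congrArg Subtype.val hσ |>.symm
    have key : (embK a).1 = inr σ * (embK b).1 * inr σ⁻¹ := by
      refine SemidirectProduct.ext ?_ (by simp [hembK, emb])
      rw [conj_left]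
      funext i
      show Multiplicative.ofAdd (a.1 i) = Multiplicative.ofAdd (b.1 (σ⁻¹ i)) * 1
      rw [mul_one, hba]
      rfl
    refine (DoubleCoset.eq _ _ _ _).mpr ⟨⟨inr σ⁻¹, inr_mem_ker r d n hdr σ⁻¹⟩, hinrK σ⁻¹,
      ⟨inr σ, inr_mem_ker r d n hdr σ⟩, hinrK σ, ?_⟩
    apply Subtype.ext
    show (embK b).1 = inr σ⁻¹ * (embK a).1 * inr σ
    have h1 : (inr σ⁻¹ : Gr1n r n) * inr σ = 1 := by rw [← map_mul, inv_mul_cancel, map_one]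
    rw [key]
    simp only [mul_assoc]
    rw [h1, mul_one, ← mul_assoc, h1, one_mul]
  · intro q
    refine Quotient.inductionOn' q (fun k => ?_)
    simp only [Quotient.liftOn'_mk'']
    refine (DoubleCoset.eq _ _ _ _).mpr ⟨1, Subgroup.one_mem _,
      ⟨inr k.1.right, inr_mem_ker r d n hdr k.1.right⟩, hinrK k.1.right, ?_⟩
    apply Subtype.ext
    show k.1 = (1 : K).1 * (embK (fwd k)).1 * inr k.1.right
    rw [show (1 : K).1 = 1 from rfl, one_mul]
    show k.1 = emb r n (toX r n k.1) * inr k.1.right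
    rw [emb_toX]
    exact decomp r n k.1
  · intro q
    refine Quotient.inductionOn' q (fun a => ?_)
    simp only [Quotient.liftOn'_mk'']
    exact congrArg Quotient.mk'' (Subtype.ext rfl)


lemma nsmul_eq_cfun_cast (hdr : d ∣ r) (m : ZMod r) :
    (r / d) • m = cfun r d (ZMod.castHom hdr (ZMod d) m) := by
  have hm : ((m.val : ℕ) : ZMod r) = m := ZMod.natCast_rightInverse m
  have h1 : (ZMod.castHom hdr (ZMod d)) m = ((m.val : ℕ) : ZMod d) := by
    rw [ZMod.castHom_apply, ← ZMod.natCast_val]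
  have h3 : ((((((m.val : ℕ) : ZMod d)).val : ℕ)) : ZMod d) = ((m.val : ℕ) : ZMod d) :=
    ZMod.natCast_rightInverse _
  have h4 : cfun r d (ZMod.castHom hdr (ZMod d) m) = ((r / d * m.val : ℕ) : ZMod r) := by
    rw [h1]
    show ((r / d * (((m.val : ℕ) : ZMod d)).val : ℕ) : ZMod r) = _
    exact natCast_congr_of_zmod r d hdr h3
  rw [h4, nsmul_eq_mul]
  conv_lhs => rw [← hm]
  push_cast
  ring

variable [hf : Fact (d ∣ r)]

/-- Double cosets `H\G/QH` are the `S_n × C_d`-orbits on all tuples. -/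
noncomputable def equiv2 :
    DoubleCoset.Quotient ((SnSub r n : Subgroup (Gr1n r n)) : Set (Gr1n r n))
        ((Qdiag r d n ⊔ SnSub r n : Subgroup (Gr1n r n)) : Set (Gr1n r n))
      ≃ Quotient (MulAction.orbitRel (Equiv.Perm (Fin n) × Multiplicative (ZMod d))
          (Fin n → ZMod r)) := by
  classical
  have hdr := hf.out
  set L := Qdiag r d n ⊔ SnSub r n with hL
  set q0 : Equiv.Perm (Fin n) → Multiplicative (ZMod r) → Gr1n r n :=
    fun τ μ => (⟨fun _ => μ ^ (r / d), 1⟩ : Gr1n r n) * inr τ with hq0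
  have hq0L : ∀ τ μ, q0 τ μ ∈ L := fun τ μ =>
    Subgroup.mul_mem _ (Subgroup.mem_sup_left (diag_mem_Qdiag r d n μ))
      (Subgroup.mem_sup_right ⟨τ, rfl⟩)
  have hq0left : ∀ τ μ, (q0 τ μ).left = fun _ => μ ^ (r / d) := by
    intro τ μ
    funext i
    rw [hq0]
    show ((⟨fun _ => μ ^ (r / d), 1⟩ : Gr1n r n) * inr τ).left i = _
    rw [SemidirectProduct.mul_left]
    simp [wreathAut]
    rfl
  have hq0right : ∀ τ μ, (q0 τ μ).right = τ := by
    intro τ μ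
    rw [hq0]
    simp
  have h1 : ∀ σ : Equiv.Perm (Fin n), (inr σ⁻¹ : Gr1n r n) * inr σ = 1 := by
    intro σ
    rw [← map_mul, inv_mul_cancel, map_one]
  refine ⟨fun q => Quotient.liftOn' q (fun x => Quotient.mk'' (toX r n x)) ?_,
    fun q => Quotient.liftOn' q (fun a => DoubleCoset.mk (SnSub r n) L (emb r n a)) ?_,
    ?_, ?_⟩
  · intro x y hrel
    obtain ⟨a, ha, b, hb, hy⟩ := DoubleCoset.rel_iff.mp hrel
    obtain ⟨σ, rfl⟩ := (mem_SnSub r n).mp ha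
    rw [hL, sup_eq_QHsub] at hb
    obtain ⟨μ, hbleft⟩ := hb
    have hyleft : y.left = fun i => x.left (σ⁻¹ i) * μ ^ (r / d) := by
      rw [hy, conj_left, hbleft]
    set p : Equiv.Perm (Fin n) × Multiplicative (ZMod d) :=
      (σ, Multiplicative.ofAdd (ZMod.castHom hdr (ZMod d) (μ.toAdd))) with hp
    have hsm : p • toX r n x = toX r n y := by
      rw [X2_smul_def]
      funext i
      show permSmul r n σ (toX r n x) i + cfun r d (ZMod.castHom hdr (ZMod d) (μ.toAdd)) = _
      rw [← nsmul_eq_cfun_cast r d hdr]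
      show (x.left (σ⁻¹ i)).toAdd + (r / d) • μ.toAdd = (y.left i).toAdd
      rw [hyleft]
      show _ = (x.left (σ⁻¹ i) * μ ^ (r / d)).toAdd
      rw [toAdd_mul, toAdd_pow]
    apply Quotient.sound'
    show toX r n x ∈ MulAction.orbit _ (toX r n y)
    exact MulAction.mem_orbit_iff.mpr ⟨p⁻¹, by rw [← hsm, inv_smul_smul]⟩
  · intro a b hab
    obtain ⟨p, hp⟩ := MulAction.mem_orbit_iff.mp hab
    obtain ⟨σ, w⟩ := p
    set μ : Multiplicative (ZMod r) := Multiplicative.ofAdd (((w.toAdd).val : ℕ) : ZMod r)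
      with hμ
    have hc : Multiplicative.toAdd (μ ^ (r / d)) = cfun r d w.toAdd := by
      rw [toAdd_pow, hμ, toAdd_ofAdd, nsmul_eq_cfun_cast r d hdr, map_natCast]
      congr 1
      exact ZMod.natCast_rightInverse _
    have ha : a = permSmul r n σ b + fun _ => cfun r d w.toAdd := by
      rw [← hp, X2_smul_def]
    have key : emb r n a = inr σ * emb r n b * q0 σ⁻¹ μ := by
      refine SemidirectProduct.ext ?_ ?_
      · rw [conj_left, hq0left]
        funext i
        show Multiplicative.ofAdd (a i) = Multiplicative.ofAdd (b (σ⁻¹ i)) * μ ^ (r / d)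
        rw [ha]
        show Multiplicative.ofAdd (b (σ⁻¹ i) + cfun r d w.toAdd) = _
        rw [ofAdd_add]
        congr 1
        rw [← hc]
        rfl
      · rw [conj_right, hq0right]
        show (1 : Equiv.Perm (Fin n)) = σ * 1 * σ⁻¹
        simp
    refine (DoubleCoset.eq _ _ _ _).mpr ⟨inr σ⁻¹, ⟨σ⁻¹, rfl⟩, (q0 σ⁻¹ μ)⁻¹,
      Subgroup.inv_mem _ (hq0L σ⁻¹ μ), ?_⟩
    rw [key]
    simp only [mul_assoc]
    rw [mul_inv_cancel, mul_one, ← mul_assoc, h1, one_mul]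
  · intro q
    refine Quotient.inductionOn' q (fun x => ?_)
    simp only [Quotient.liftOn'_mk'']
    refine (DoubleCoset.eq _ _ _ _).mpr ⟨1, Subgroup.one_mem _, inr x.right,
      Subgroup.mem_sup_right ⟨x.right, rfl⟩, ?_⟩
    rw [one_mul, emb_toX]
    exact decomp r n x
  · intro q
    refine Quotient.inductionOn' q (fun a => ?_)
    simp only [Quotient.liftOn'_mk'']
    rfl

end Bridge

end CardDosetAux

/-- With `H = S_n`, `K = G(r,d,n)`, `G = G(r,1,n)` and
`Q = {(μ,…,μ,id) : μ ∈ C_d}` (so `G/K ≅ C_d` and `Q·H ≅ C_d × S_n`), the number of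
double cosets `|H \ K / H|` equals the number of double cosets `|H \ G / (Q·H)|`. -/
theorem card_doset_eq (r d n : ℕ) [NeZero r] (h : d ∣ r) :
    Nat.card (DoubleCoset.Quotient
        (((SnSub r n).subgroupOf (PhiHom r d n h).ker : Subgroup (PhiHom r d n h).ker) :
          Set (PhiHom r d n h).ker)
        (((SnSub r n).subgroupOf (PhiHom r d n h).ker : Subgroup (PhiHom r d n h).ker) :
          Set (PhiHom r d n h).ker))
      = Nat.card (DoubleCoset.Quotient ((SnSub r n : Subgroup (Gr1n r n)) : Set (Gr1n r n))
          ((Qdiag r d n ⊔ SnSub r n : Subgroup (Gr1n r n)) : Set (Gr1n r n))) := by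
  haveI hnd : NeZero d := ⟨fun hd => NeZero.ne r (by subst hd; exact Nat.eq_zero_of_zero_dvd h)⟩
  haveI : Fact (d ∣ r) := ⟨h⟩
  rw [Nat.card_congr (CardDosetAux.equiv1 r d n h), Nat.card_congr (CardDosetAux.equiv2 r d n)]
  exact CardDosetAux.orbits_card_eq r d n
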